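/- With the switch prior w as above (N ≥ 2, α_t = 1/t) and any index sequence with m switches, w(i_{1:n}) ≥ (1/N) * n^{-m} * (N-1)^{-m} * (n-m)^{-1}. -/

import Mathlib

open Finset

/-- The switch prior on index sequences `i` (positions 1..n, values in `Fin N`),
with switch rate `α_t = 1/t`. -/
noncomputable def switchPrior (N n : ℕ) (i : ℕ → Fin N) : ℝ :=
  (1 / (N : ℝ)) *
    ∏ t ∈ Finset.Icc 2 n,
      (if i t = i (t - 1) then 1 - 1 / (t : ℝ) else (1 / (t : ℝ)) / ((N : ℝ) - 1))

/-- The number of switches `m(i) = #{t ∈ [2,n] : i_t ≠ i_{t-1}}`. -/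
def numSwitches (N n : ℕ) (i : ℕ → Fin N) : ℕ :=
  ((Finset.Icc 2 n).filter fun t => i t ≠ i (t - 1)).card

/-- Intermediate bound: `w(i_{1:n}) ≥ (1/N) * n^{-m} * (N-1)^{-m} * (n-m)^{-1}`
where `m` is the number of switches. -/
lemma aux_switch (a b : ℝ) (m : ℕ) (ha : 1 ≤ a) (hb : 1 ≤ b) (hma : (m:ℝ) ≤ a - 1) :
    ((a+1) ^ (m+1))⁻¹ * (b ^ (m+1))⁻¹ * ((a+1) - (m+1))⁻¹ ≤
      (a ^ m)⁻¹ * (b ^ m)⁻¹ * (a - m)⁻¹ * ((1/(a+1))/b) := by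
  have hkey : ((a+1)^m)⁻¹ ≤ (a^m)⁻¹ := by
    apply inv_anti₀ (pow_pos (by linarith) m)
    exact pow_le_pow_left₀ (by linarith) (by linarith) m
  have h1 : (0:ℝ) < a - m := by linarith
  have hnn : (0:ℝ) ≤ ((b^m)⁻¹ * (a - m)⁻¹ * ((1/(a+1))/b)) :=
    mul_nonneg (mul_nonneg (by positivity) (le_of_lt (inv_pos.mpr h1))) (by positivity)
  calc ((a+1) ^ (m+1))⁻¹ * (b ^ (m+1))⁻¹ * ((a+1) - (m+1))⁻¹
      = ((a+1)^m)⁻¹ * ((b^m)⁻¹ * (a - m)⁻¹ * ((1/(a+1))/b)) := by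
        rw [pow_succ, pow_succ, mul_inv, mul_inv]; ring
    _ ≤ (a^m)⁻¹ * ((b^m)⁻¹ * (a - m)⁻¹ * ((1/(a+1))/b)) :=
        mul_le_mul_of_nonneg_right hkey hnn
    _ = (a ^ m)⁻¹ * (b ^ m)⁻¹ * (a - m)⁻¹ * ((1/(a+1))/b) := by ring

lemma aux_stay (a b : ℝ) (m : ℕ) (ha : 1 ≤ a) (hb : 1 ≤ b) (hma : (m:ℝ) ≤ a - 1) :
    ((a+1) ^ m)⁻¹ * (b ^ m)⁻¹ * ((a+1) - m)⁻¹ ≤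
      (a ^ m)⁻¹ * (b ^ m)⁻¹ * (a - m)⁻¹ * (1 - 1/(a+1)) := by
  have h1 : (0:ℝ) < a - m := by linarith
  have h2 : (0:ℝ) < a + 1 - m := by linarith
  have h3 : (0:ℝ) < a + 1 := by linarith
  have hkey : ((a+1)^m)⁻¹ ≤ (a^m)⁻¹ := by
    apply inv_anti₀ (pow_pos (by linarith) m)
    exact pow_le_pow_left₀ (by linarith) (by linarith) m
  have h4 : ((a+1) - m)⁻¹ ≤ (a - m)⁻¹ * (a/(a+1)) := by
    rw [inv_eq_one_div (a - (m:ℝ)), div_mul_div_comm, one_mul, inv_eq_one_div,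
      div_le_div_iff₀ h2 (by positivity)]
    nlinarith [Nat.cast_nonneg (α := ℝ) m]
  have heq : 1 - 1/(a+1) = a/(a+1) := by
    field_simp
    ring
  rw [heq]
  calc ((a+1) ^ m)⁻¹ * (b ^ m)⁻¹ * ((a+1) - m)⁻¹
      ≤ (a ^ m)⁻¹ * (b ^ m)⁻¹ * ((a - m)⁻¹ * (a/(a+1))) := by
        apply mul_le_mul (mul_le_mul_of_nonneg_right hkey (by positivity)) h4
          (le_of_lt (inv_pos.mpr h2)) (by positivity)
    _ = (a ^ m)⁻¹ * (b ^ m)⁻¹ * (a - m)⁻¹ * (a/(a+1)) := by ring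

theorem switch_prior_lower_bound (N n : ℕ) (hN : 2 ≤ N) (hn : 1 ≤ n) (i : ℕ → Fin N) :
    (1 / (N : ℝ)) * ((n : ℝ) ^ (numSwitches N n i))⁻¹ *
        (((N : ℝ) - 1) ^ (numSwitches N n i))⁻¹ * ((n : ℝ) - numSwitches N n i)⁻¹ ≤
      switchPrior N n i := by
  induction n with
  | zero => omega
  | succ n ih =>
    rcases Nat.eq_or_lt_of_le hn with h1 | h1
    · -- n + 1 = 1
      have hn0 : n = 0 := by omega
      subst hn0
      simp [switchPrior, numSwitches]
    · -- n ≥ 1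
      have hn1 : 1 ≤ n := by omega
      have ih := ih hn1
      have hmem : (n+1) ∉ Finset.Icc 2 n := by simp
      have hIcc : Finset.Icc 2 (n+1) = insert (n+1) (Finset.Icc 2 n) := by
        exact (Finset.insert_Icc_right_eq_Icc_add_one (by omega)).symm
      set m := numSwitches N n i with hm
      have hmle : m ≤ n - 1 := by
        have := Finset.card_filter_le (Finset.Icc 2 n) (fun t => i t ≠ i (t - 1))
        simpa [numSwitches, Nat.card_Icc, hm] using this
      have hmleR : (m:ℝ) ≤ (n:ℝ) - 1 := by
        have : (m:ℝ) ≤ ((n-1 : ℕ) : ℝ) := Nat.cast_le.mpr hmle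
        rw [Nat.cast_sub hn1] at this; simpa using this
      have haR : (1:ℝ) ≤ (n:ℝ) := by exact_mod_cast hn1
      have hbR : (1:ℝ) ≤ (N:ℝ) - 1 := by
        have : (2:ℝ) ≤ (N:ℝ) := by exact_mod_cast hN
        linarith
      have hNpos : (0:ℝ) < 1 / (N:ℝ) := by positivity
      have hsp : switchPrior N (n+1) i =
          switchPrior N n i *
            (if i (n+1) = i n then 1 - 1 / ((n+1 : ℕ) : ℝ)
             else (1 / ((n+1 : ℕ) : ℝ)) / ((N : ℝ) - 1)) := by
        rw [switchPrior, hIcc, Finset.prod_insert hmem]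
        simp only [Nat.add_sub_cancel]
        rw [switchPrior]; ring
      have hns : numSwitches N (n+1) i = if i (n+1) = i n then m else m + 1 := by
        rw [numSwitches, hIcc, Finset.filter_insert]
        simp only [Nat.add_sub_cancel]
        by_cases h : i (n+1) = i n
        · simp [h, numSwitches, hm]
        · simp [h, numSwitches, hm, Finset.card_insert_of_notMem (fun hx => hmem (Finset.mem_of_mem_filter _ hx))]
      by_cases h : i (n+1) = i n
      · rw [hsp, if_pos h, hns, if_pos h]
        have key := aux_stay (n:ℝ) ((N:ℝ)-1) m haR hbR hmleR
        have step : (1/(N:ℝ)) * (((n:ℝ)+1) ^ m)⁻¹ * (((N:ℝ)-1) ^ m)⁻¹ * (((n:ℝ)+1) - m)⁻¹ ≤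
            (1/(N:ℝ)) * ((n:ℝ) ^ m)⁻¹ * (((N:ℝ)-1) ^ m)⁻¹ * ((n:ℝ) - m)⁻¹ * (1 - 1/((n:ℝ)+1)) := by
          calc (1/(N:ℝ)) * (((n:ℝ)+1) ^ m)⁻¹ * (((N:ℝ)-1) ^ m)⁻¹ * (((n:ℝ)+1) - m)⁻¹
              = (1/(N:ℝ)) * ((((n:ℝ)+1) ^ m)⁻¹ * (((N:ℝ)-1) ^ m)⁻¹ * (((n:ℝ)+1) - m)⁻¹) := by ring
            _ ≤ (1/(N:ℝ)) * (((n:ℝ) ^ m)⁻¹ * (((N:ℝ)-1) ^ m)⁻¹ * ((n:ℝ) - m)⁻¹ * (1 - 1/((n:ℝ)+1))) :=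
                mul_le_mul_of_nonneg_left key (le_of_lt hNpos)
            _ = _ := by ring
        have hfac : (0:ℝ) ≤ 1 - 1/((n:ℝ)+1) := by
          have : (1:ℝ)/((n:ℝ)+1) ≤ 1 := by
            rw [div_le_one (by linarith)]; linarith
          linarith
        calc (1/(N:ℝ)) * (((n+1:ℕ):ℝ) ^ m)⁻¹ * (((N:ℝ)-1) ^ m)⁻¹ * (((n+1:ℕ):ℝ) - m)⁻¹
            ≤ (1/(N:ℝ)) * ((n:ℝ) ^ m)⁻¹ * (((N:ℝ)-1) ^ m)⁻¹ * ((n:ℝ) - m)⁻¹ * (1 - 1/((n:ℝ)+1)) := by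
              push_cast; push_cast at step; exact step
          _ ≤ switchPrior N n i * (1 - 1/(((n+1:ℕ)):ℝ)) := by
              push_cast; exact mul_le_mul_of_nonneg_right ih hfac
      · rw [hsp, if_neg h, hns, if_neg h]
        have key := aux_switch (n:ℝ) ((N:ℝ)-1) m haR hbR hmleR
        have hfac : (0:ℝ) ≤ (1/((n:ℝ)+1)) / ((N:ℝ)-1) := by positivity
        have step : (1/(N:ℝ)) * (((n:ℝ)+1) ^ (m+1))⁻¹ * (((N:ℝ)-1) ^ (m+1))⁻¹ * (((n:ℝ)+1) - ((m:ℝ)+1))⁻¹ ≤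
            (1/(N:ℝ)) * ((n:ℝ) ^ m)⁻¹ * (((N:ℝ)-1) ^ m)⁻¹ * ((n:ℝ) - m)⁻¹ * ((1/((n:ℝ)+1))/((N:ℝ)-1)) := by
          calc (1/(N:ℝ)) * (((n:ℝ)+1) ^ (m+1))⁻¹ * (((N:ℝ)-1) ^ (m+1))⁻¹ * (((n:ℝ)+1) - ((m:ℝ)+1))⁻¹
              = (1/(N:ℝ)) * ((((n:ℝ)+1) ^ (m+1))⁻¹ * (((N:ℝ)-1) ^ (m+1))⁻¹ * (((n:ℝ)+1) - ((m:ℝ)+1))⁻¹) := by ring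
            _ ≤ (1/(N:ℝ)) * (((n:ℝ) ^ m)⁻¹ * (((N:ℝ)-1) ^ m)⁻¹ * ((n:ℝ) - m)⁻¹ * ((1/((n:ℝ)+1))/((N:ℝ)-1))) :=
                mul_le_mul_of_nonneg_left key (le_of_lt hNpos)
            _ = _ := by ring
        calc (1/(N:ℝ)) * (((n+1:ℕ):ℝ) ^ (m+1))⁻¹ * (((N:ℝ)-1) ^ (m+1))⁻¹ * (((n+1:ℕ):ℝ) - ((m+1:ℕ):ℝ))⁻¹
            ≤ (1/(N:ℝ)) * ((n:ℝ) ^ m)⁻¹ * (((N:ℝ)-1) ^ m)⁻¹ * ((n:ℝ) - m)⁻¹ * ((1/((n:ℝ)+1))/((N:ℝ)-1)) := by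
              push_cast; push_cast at step; exact step
          _ ≤ switchPrior N n i * ((1/(((n+1:ℕ)):ℝ))/((N:ℝ)-1)) := by
              push_cast; exact mul_le_mul_of_nonneg_right ih hfac
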